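/- Let m, n be positive reals with m > 1, n ≥ m, and let A > 0 with A^n > (m-1)/(n-m+1). For γ ∈ [c, 1) with 0 < c, define φ(γ) = γ^m (1+A^n)/(1+γ^n A^n). If additionally c ≥ ((m-1)(1+A^n)/(n A^n))^(1/(n-m+1)), then φ(γ) > γ for all γ ∈ [c, 1). Equivalently, γ^(m-1)(1+A^n) > 1 + γ^n A^n on [c, 1). -/
import Mathlib


theorem stmt_12 (m n A c : ℝ) (hm : 1 < m) (hnm : m ≤ n) (hA : 0 < A)
    (hAn : A ^ n > (m - 1) / (n - m + 1)) (hc : 0 < c)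
    (hc' : c ≥ ((m - 1) * (1 + A ^ n) / (n * A ^ n)) ^ (1 / (n - m + 1))) :
    ∀ γ : ℝ, c ≤ γ → γ < 1 →
      γ ^ m * (1 + A ^ n) / (1 + γ ^ n * A ^ n) > γ ∧
        γ ^ (m - 1) * (1 + A ^ n) > 1 + γ ^ n * A ^ n := by
  intro γ hγc hγ1
  have hγ0 : 0 < γ := lt_of_lt_of_le hc hγc
  set An := A ^ n with hAndef
  have hAn0 : 0 < An := Real.rpow_pos_of_pos hA n
  have hn0 : 0 < n := by linarith
  have hm1 : 0 < m - 1 := by linarith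
  have hp0 : 0 < n - m + 1 := by linarith
  have h1An : 0 < 1 + An := by linarith
  set r := (m - 1) * (1 + An) / (n * An) with hrdef
  have hr0 : 0 < r := by positivity
  set c0 := r ^ (1 / (n - m + 1)) with hc0def
  have hc0nn : 0 ≤ c0 := Real.rpow_nonneg hr0.le _
  -- c0 ^ (n-m+1) = r
  have hc0pow : c0 ^ (n - m + 1) = r := by
    rw [← Real.rpow_mul hr0.le]
    rw [one_div, inv_mul_cancel₀ hp0.ne']
    exact Real.rpow_one r
  set F : ℝ → ℝ := fun x => x ^ (m - 1) * (1 + An) - (1 + x ^ n * An) with hF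
  -- derivative
  have hder : ∀ x : ℝ, 0 < x →
      HasDerivAt F ((m - 1) * x ^ (m - 1 - 1) * (1 + An) - n * x ^ (n - 1) * An) x := by
    intro x hx
    have h1 : HasDerivAt (fun y : ℝ => y ^ (m - 1) * (1 + An))
        ((m - 1) * x ^ (m - 1 - 1) * (1 + An)) x :=
      (Real.hasDerivAt_rpow_const (Or.inl hx.ne')).mul_const _
    have h2 : HasDerivAt (fun y : ℝ => 1 + y ^ n * An) (n * x ^ (n - 1) * An) x :=
      ((Real.hasDerivAt_rpow_const (Or.inl hx.ne')).mul_const _).const_add _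
    exact h1.sub h2
  -- derivative negative for x in (γ, 1)
  have hderneg : ∀ x ∈ Set.Ioo γ 1,
      (m - 1) * x ^ (m - 1 - 1) * (1 + An) - n * x ^ (n - 1) * An < 0 := by
    intro x hx
    have hx0 : 0 < x := lt_trans hγ0 hx.1
    have hxc0 : c0 < x := lt_of_le_of_lt (le_trans hc' hγc) hx.1
    have hpow : r < x ^ (n - m + 1) := by
      calc r = c0 ^ (n - m + 1) := hc0pow.symm
        _ < x ^ (n - m + 1) := Real.rpow_lt_rpow hc0nn hxc0 hp0
    have hkey : (m - 1) * (1 + An) < n * An * x ^ (n - m + 1) := by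
      have := (div_lt_iff₀ (by positivity : (0:ℝ) < n * An)).mp hpow
      linarith [this]
    have hsplit : x ^ (n - 1) = x ^ (n - m + 1) * x ^ (m - 1 - 1) := by
      rw [← Real.rpow_add hx0]; ring_nf
    have hxm : 0 < x ^ (m - 1 - 1) := Real.rpow_pos_of_pos hx0 _
    have := mul_lt_mul_of_pos_right hkey hxm
    rw [hsplit]
    nlinarith [this]
  -- F strictly anti on [γ, 1]
  have hanti : StrictAntiOn F (Set.Icc γ 1) := by
    apply strictAntiOn_of_deriv_neg (convex_Icc γ 1)
    · intro x hx
      have hx0 : 0 < x := lt_of_lt_of_le hγ0 hx.1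
      exact (hder x hx0).continuousAt.continuousWithinAt
    · intro x hx
      rw [interior_Icc] at hx
      have hx0 : 0 < x := lt_trans hγ0 hx.1
      rw [(hder x hx0).deriv]
      exact hderneg x hx
  have hF1 : F 1 = 0 := by simp [hF]
  have hFγ : 0 < F γ := by
    have := hanti (Set.mem_Icc.mpr ⟨le_refl γ, hγ1.le⟩)
      (Set.mem_Icc.mpr ⟨hγ1.le, le_refl 1⟩) hγ1
    rw [hF1] at this
    exact this
  have hmain : γ ^ (m - 1) * (1 + An) > 1 + γ ^ n * An := by
    simp only [hF] at hFγ; linarith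
  refine ⟨?_, hmain⟩
  have hden : 0 < 1 + γ ^ n * An := by positivity
  rw [gt_iff_lt, lt_div_iff₀ hden]
  have hγm : γ ^ m = γ * γ ^ (m - 1) := by
    have h : γ ^ (1:ℝ) * γ ^ (m - 1) = γ ^ m := by
      rw [← Real.rpow_add hγ0]; ring_nf
    rw [← h, Real.rpow_one]
  rw [hγm]
  nlinarith [mul_lt_mul_of_pos_left hmain hγ0]
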